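/- Let N ≥ 2, R ∈ ℝ, and a, b ∈ EuclideanSpace ℝ (Fin N). Let V ⊆ EuclideanSpace ℝ (Fin N) be open and let Ψ be twice continuously differentiable on V. Define I(r) = (R²/‖r − a‖²)·(r − a) + b. Then for every r₀ ≠ a with I(r₀) ∈ V, the Laplacian of the Kelvin-transformed function r ↦ ‖r − a‖^{−(N−2)} · Ψ(I(r)) at r₀ equals (R⁴/‖r₀ − a‖^{N+2}) · (Δ Ψ)(I(r₀)). -/

import Mathlib

open scoped RealInnerProductSpace Topology
open Filter

/-- The Laplacian of a real-valued function on `EuclideanSpace ℝ (Fin N)`: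
the sum of the second partial derivatives, i.e. the trace of the second
Fréchet derivative. -/
noncomputable def laplacian {N : ℕ} (f : EuclideanSpace ℝ (Fin N) → ℝ)
    (x : EuclideanSpace ℝ (Fin N)) : ℝ :=
  ∑ i : Fin N,
    iteratedFDeriv ℝ 2 f x ![EuclideanSpace.single i 1, EuclideanSpace.single i 1]

namespace KelvinAux

variable {N : ℕ}

lemma sum_smul_single (v : EuclideanSpace ℝ (Fin N)) :
    ∑ j, v j • EuclideanSpace.single j (1:ℝ) = v := by
  ext k
  rw [show (∑ j, (v j) • EuclideanSpace.single j (1:ℝ)) k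
      = ∑ j, ((v j) • EuclideanSpace.single j (1:ℝ)) k from by rw [WithLp.ofLp_sum]; exact Finset.sum_apply k Finset.univ _]
  simp [EuclideanSpace.single_apply]

lemma clm_sum_eval (v : EuclideanSpace ℝ (Fin N)) (L : EuclideanSpace ℝ (Fin N) →L[ℝ] ℝ) :
    ∑ i, v i * L (EuclideanSpace.single i (1:ℝ)) = L v := by
  conv_rhs => rw [← sum_smul_single v]
  rw [map_sum]
  simp

lemma sum_sq_eq (v : EuclideanSpace ℝ (Fin N)) : ∑ i, v i ^ 2 = ‖v‖ ^ 2 := by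
  rw [EuclideanSpace.norm_eq, Real.sq_sqrt (by positivity)]
  simp

lemma clm2_sum_eval (v : EuclideanSpace ℝ (Fin N))
    (H : EuclideanSpace ℝ (Fin N) →L[ℝ] EuclideanSpace ℝ (Fin N) →L[ℝ] ℝ)
    (w : EuclideanSpace ℝ (Fin N)) :
    ∑ i, v i * H (EuclideanSpace.single i (1:ℝ)) w = H v w := by
  have := clm_sum_eval v (H.flip w)
  simpa using this

lemma hasFDerivAt_normsq (a r : EuclideanSpace ℝ (Fin N)) :
    HasFDerivAt (fun r : EuclideanSpace ℝ (Fin N) => ‖r - a‖^2)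
    ((2:ℝ) • (innerSL ℝ (r - a))) r := by
  have h := ((hasFDerivAt_id r).sub_const a).norm_sq
  convert h using 1
  · rfl
  ext v
  simp
  ext v
  simp

lemma inner_diffAt (a r : EuclideanSpace ℝ (Fin N)) :
    DifferentiableAt ℝ (fun r : EuclideanSpace ℝ (Fin N) => innerSL ℝ (r - a)) r := by
  have he : (fun r : EuclideanSpace ℝ (Fin N) => innerSL ℝ (r - a))
      = fun r => ∑ j, (r j - a j) • (EuclideanSpace.proj (𝕜 := ℝ) j :
          EuclideanSpace ℝ (Fin N) →L[ℝ] ℝ) := by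
    funext r
    ext v
    simp [ContinuousLinearMap.sum_apply, PiLp.inner_apply, RCLike.inner_apply]
    rw [← Finset.sum_sub_distrib]
    exact Finset.sum_congr rfl fun j _ => by ring
  rw [he]
  exact DifferentiableAt.fun_sum fun j _ =>
    (((EuclideanSpace.proj (𝕜 := ℝ) j).differentiableAt).sub_const (a j)).smul_const
      (EuclideanSpace.proj (𝕜 := ℝ) j : EuclideanSpace ℝ (Fin N) →L[ℝ] ℝ)

/-- derivative of `r ↦ R^2/‖r-a‖^2`. -/
noncomputable def Sd (R : ℝ) (a r : EuclideanSpace ℝ (Fin N)) :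
    EuclideanSpace ℝ (Fin N) →L[ℝ] ℝ :=
  (R^2) • ((-(((‖r - a‖^2)^2))⁻¹) • ((2:ℝ) • innerSL ℝ (r - a)))

/-- derivative of the inversion map. -/
noncomputable def Ad (R : ℝ) (a r : EuclideanSpace ℝ (Fin N)) :
    EuclideanSpace ℝ (Fin N) →L[ℝ] EuclideanSpace ℝ (Fin N) :=
  (R^2/‖r - a‖^2) • ContinuousLinearMap.id ℝ _ + (Sd R a r).smulRight (r - a)

/-- derivative of the Kelvin transform. -/
noncomputable def Fd (R cN : ℝ) (a : EuclideanSpace ℝ (Fin N)) (Ψ : EuclideanSpace ℝ (Fin N) → ℝ)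
    (I : EuclideanSpace ℝ (Fin N) → EuclideanSpace ℝ (Fin N)) (r : EuclideanSpace ℝ (Fin N)) :
    EuclideanSpace ℝ (Fin N) →L[ℝ] ℝ :=
  ((‖r - a‖^2) ^ cN) • ((fderiv ℝ Ψ (I r)).comp (Ad R a r)) +
    (Ψ (I r)) • ((cN * (‖r - a‖^2) ^ (cN - 1)) • ((2:ℝ) • innerSL ℝ (r - a)))

variable {R cN : ℝ} {a b : EuclideanSpace ℝ (Fin N)}
  {Ψ : EuclideanSpace ℝ (Fin N) → ℝ}
  {I : EuclideanSpace ℝ (Fin N) → EuclideanSpace ℝ (Fin N)}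

lemma qpos {r : EuclideanSpace ℝ (Fin N)} (hr : r ≠ a) : 0 < ‖r - a‖^2 := by
  have : r - a ≠ 0 := sub_ne_zero.mpr hr
  exact pow_pos (norm_pos_iff.mpr this) 2

lemma hasFDerivAt_s {r : EuclideanSpace ℝ (Fin N)} (hr : r ≠ a) :
    HasFDerivAt (fun r => R^2/‖r - a‖^2) (Sd R a r) r := by
  have h1 : HasFDerivAt (fun r : EuclideanSpace ℝ (Fin N) => (‖r - a‖^2)⁻¹)
      ((-(((‖r - a‖^2)^2))⁻¹) • ((2:ℝ) • innerSL ℝ (r - a))) r :=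
    (hasDerivAt_inv (ne_of_gt (qpos hr))).comp_hasFDerivAt r (hasFDerivAt_normsq a r)
  have h2 := h1.const_mul (R^2)
  have h3 : (fun r : EuclideanSpace ℝ (Fin N) => R^2 * (‖r - a‖^2)⁻¹)
      = fun r => R^2/‖r - a‖^2 := by
    funext r; rw [div_eq_mul_inv]
  rw [← h3]
  exact h2

lemma hasFDerivAt_I (hI : I = fun r => (R ^ 2 / ‖r - a‖ ^ 2) • (r - a) + b)
    {r : EuclideanSpace ℝ (Fin N)} (hr : r ≠ a) :
    HasFDerivAt I (Ad R a r) r := by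
  rw [hI]
  exact ((hasFDerivAt_s hr).smul ((hasFDerivAt_id r).sub_const a)).add_const b

lemma hasFDerivAt_u (hI : I = fun r => (R ^ 2 / ‖r - a‖ ^ 2) • (r - a) + b)
    {r : EuclideanSpace ℝ (Fin N)} (hr : r ≠ a) (hd : DifferentiableAt ℝ Ψ (I r)) :
    HasFDerivAt (fun r => (‖r - a‖^2) ^ cN * Ψ (I r)) (Fd R cN a Ψ I r) r := by
  have hg : HasFDerivAt (fun r : EuclideanSpace ℝ (Fin N) => (‖r - a‖^2) ^ cN)
      ((cN * (‖r - a‖^2) ^ (cN - 1)) • ((2:ℝ) • innerSL ℝ (r - a))) r :=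
    (hasFDerivAt_normsq a r).rpow_const (Or.inl (ne_of_gt (qpos hr)))
  have hc : HasFDerivAt (fun r => Ψ (I r)) ((fderiv ℝ Ψ (I r)).comp (Ad R a r)) r :=
    hd.hasFDerivAt.comp r (hasFDerivAt_I hI hr)
  exact hg.mul hc

end KelvinAux


set_option maxHeartbeats 2000000 in
theorem kelvin_transform_laplacian
    {N : ℕ} (hN : 2 ≤ N) (R : ℝ)
    (a b : EuclideanSpace ℝ (Fin N))
    (V : Set (EuclideanSpace ℝ (Fin N))) (hV : IsOpen V)
    (Ψ : EuclideanSpace ℝ (Fin N) → ℝ) (hΨ : ContDiffOn ℝ 2 Ψ V)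
    (I : EuclideanSpace ℝ (Fin N) → EuclideanSpace ℝ (Fin N))
    (hI : I = fun r => (R ^ 2 / ‖r - a‖ ^ 2) • (r - a) + b) :
    ∀ r₀ : EuclideanSpace ℝ (Fin N), r₀ ≠ a → I r₀ ∈ V →
      laplacian (fun r => ‖r - a‖ ^ (-((N : ℝ) - 2)) * Ψ (I r)) r₀
        = (R ^ 4 / ‖r₀ - a‖ ^ ((N : ℝ) + 2)) * laplacian Ψ (I r₀) := by
  intro r₀ hr₀ hV₀
  set cN : ℝ := (2 - (N:ℝ))/2 with hcN
  have hQpos : 0 < ‖r₀ - a‖^2 := KelvinAux.qpos hr₀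
  have hQne : (‖r₀ - a‖^2 : ℝ) ≠ 0 := ne_of_gt hQpos
  have hΨd : ∀ y ∈ V, DifferentiableAt ℝ Ψ y := fun y hy =>
    (hΨ.differentiableOn (by norm_num)).differentiableAt (hV.mem_nhds hy)
  have hPc : ContDiffOn ℝ 1 (fderiv ℝ Ψ) V := hΨ.fderiv_of_isOpen hV (by norm_num)
  have hPd : DifferentiableAt ℝ (fderiv ℝ Ψ) (I r₀) :=
    (hPc.differentiableOn (by norm_num)).differentiableAt (hV.mem_nhds hV₀)
  -- rewrite the transformed function using the squared norm
  have hueq : (fun r => ‖r - a‖ ^ (-((N : ℝ) - 2)) * Ψ (I r))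
      = fun r => (‖r - a‖^2) ^ cN * Ψ (I r) := by
    funext r
    congr 1
    rw [← Real.rpow_natCast (‖r - a‖) 2, ← Real.rpow_mul (norm_nonneg _)]
    congr 1
    rw [hcN]; push_cast; ring
  rw [hueq]
  -- the first derivative is eventually `Fd`
  have hnhds : {r : EuclideanSpace ℝ (Fin N) | r ≠ a ∧ I r ∈ V} ∈ 𝓝 r₀ := by
    have h1 : {r : EuclideanSpace ℝ (Fin N) | r ≠ a} ∈ 𝓝 r₀ :=
      isOpen_compl_singleton.mem_nhds (by simpa using hr₀)
    have h2 : I ⁻¹' V ∈ 𝓝 r₀ :=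
      (KelvinAux.hasFDerivAt_I hI hr₀).differentiableAt.continuousAt.preimage_mem_nhds
        (hV.mem_nhds hV₀)
    filter_upwards [h1, h2] with r hra hrV
    exact ⟨hra, hrV⟩
  have hev : fderiv ℝ (fun r => (‖r - a‖^2) ^ cN * Ψ (I r)) =ᶠ[𝓝 r₀]
      KelvinAux.Fd R cN a Ψ I := by
    filter_upwards [hnhds] with r hr
    exact (KelvinAux.hasFDerivAt_u hI hr.1 (hΨd _ hr.2)).fderiv
  have hsnd : fderiv ℝ (fderiv ℝ (fun r => (‖r - a‖^2) ^ cN * Ψ (I r))) r₀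
      = fderiv ℝ (KelvinAux.Fd R cN a Ψ I) r₀ := hev.fderiv_eq
  -- differentiability of Fd at r₀
  have hqd : DifferentiableAt ℝ (fun r : EuclideanSpace ℝ (Fin N) => ‖r - a‖^2) r₀ :=
    (KelvinAux.hasFDerivAt_normsq a r₀).differentiableAt
  have hinnd := KelvinAux.inner_diffAt a r₀
  have hSdd : DifferentiableAt ℝ (fun r => KelvinAux.Sd (N := N) R a r) r₀ := by
    simp only [KelvinAux.Sd]
    exact ((((hqd.pow 2).inv (pow_ne_zero 2 hQne)).neg).smul
      (hinnd.const_smul (2:ℝ))).const_smul (R^2)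
  have hAdd : DifferentiableAt ℝ (fun r => KelvinAux.Ad (N := N) R a r) r₀ := by
    simp only [KelvinAux.Ad]
    refine DifferentiableAt.add ((KelvinAux.hasFDerivAt_s hr₀).differentiableAt.smul_const _) ?_
    fun_prop
  have hId' : DifferentiableAt ℝ I r₀ := (KelvinAux.hasFDerivAt_I hI hr₀).differentiableAt
  have hPId : DifferentiableAt ℝ (fun r => fderiv ℝ Ψ (I r)) r₀ := hPd.comp r₀ hId'
  have hΨId : DifferentiableAt ℝ (fun r => Ψ (I r)) r₀ := (hΨd _ hV₀).comp r₀ hId'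
  have hg1d : DifferentiableAt ℝ (fun r : EuclideanSpace ℝ (Fin N) => (‖r - a‖^2)^cN) r₀ :=
    ((KelvinAux.hasFDerivAt_normsq a r₀).rpow_const (Or.inl hQne)).differentiableAt
  have hgm1d : DifferentiableAt ℝ (fun r : EuclideanSpace ℝ (Fin N) => (‖r - a‖^2)^(cN-1)) r₀ :=
    ((KelvinAux.hasFDerivAt_normsq a r₀).rpow_const (Or.inl hQne)).differentiableAt
  have hFd : DifferentiableAt ℝ (KelvinAux.Fd R cN a Ψ I) r₀ := by
    show DifferentiableAt ℝ (fun r => KelvinAux.Fd R cN a Ψ I r) r₀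
    simp only [KelvinAux.Fd]
    exact (hg1d.smul (hPId.clm_comp hAdd)).add
      (hΨId.smul ((hgm1d.const_mul cN).smul (hinnd.const_smul (2:ℝ))))
  -- key evaluation of the second derivative in direction i
  have key : ∀ i : Fin N, fderiv ℝ (KelvinAux.Fd R cN a Ψ I) r₀ (EuclideanSpace.single i (1:ℝ)) (EuclideanSpace.single i (1:ℝ))
      = (‖r₀ - a‖^2)^cN * (2*(-2*R^2*(r₀ i - a i)/(‖r₀ - a‖^2)^2)*((fderiv ℝ Ψ (I r₀)) (EuclideanSpace.single i (1:ℝ))) + (-2*R^2/(‖r₀ - a‖^2)^2 + 8*R^2*(r₀ i - a i)^2/(‖r₀ - a‖^2)^3)*((fderiv ℝ Ψ (I r₀)) (r₀ - a)) + (R^2/(‖r₀ - a‖^2))^2*((fderiv ℝ (fderiv ℝ Ψ) (I r₀)) (EuclideanSpace.single i (1:ℝ)) (EuclideanSpace.single i (1:ℝ))) + (R^2/(‖r₀ - a‖^2))*(-2*R^2*(r₀ i - a i)/(‖r₀ - a‖^2)^2)*((fderiv ℝ (fderiv ℝ Ψ) (I r₀)) (EuclideanSpace.single i (1:ℝ))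 (r₀ - a) + (fderiv ℝ (fderiv ℝ Ψ) (I r₀)) (r₀ - a) (EuclideanSpace.single i (1:ℝ))) + (-2*R^2*(r₀ i - a i)/(‖r₀ - a‖^2)^2)^2*((fderiv ℝ (fderiv ℝ Ψ) (I r₀)) (r₀ - a) (r₀ - a))) + 4*cN*(‖r₀ - a‖^2)^(cN-1)*(r₀ i - a i)*((R^2/(‖r₀ - a‖^2))*((fderiv ℝ Ψ (I r₀)) (EuclideanSpace.single i (1:ℝ))) + (-2*R^2*(r₀ i - a i)/(‖r₀ - a‖^2)^2)*((fderiv ℝ Ψ (I r₀)) (r₀ - a))) + (Ψ (I r₀))*(2*cN*(‖r₀ - a‖^2)^(cN-1) + 4*cN*(cN-1)*(‖r₀ - a‖^2)^(cN-1-1)*(r₀ i - a i)^2) := by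
    intro i
    have hred : fderiv ℝ (fun r => KelvinAux.Fd R cN a Ψ I r (EuclideanSpace.single i (1:ℝ))) r₀ =
        (fderiv ℝ (KelvinAux.Fd R cN a Ψ I) r₀).flip (EuclideanSpace.single i (1:ℝ)) := by
      rw [fderiv_clm_apply hFd (differentiableAt_const _)]
      simp
    have hstep : fderiv ℝ (KelvinAux.Fd R cN a Ψ I) r₀ (EuclideanSpace.single i (1:ℝ)) (EuclideanSpace.single i (1:ℝ))
        = fderiv ℝ (fun r => KelvinAux.Fd R cN a Ψ I r (EuclideanSpace.single i (1:ℝ))) r₀ (EuclideanSpace.single i (1:ℝ)) := by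
      rw [hred]; rfl
    rw [hstep]
    have h2 : (fun r => KelvinAux.Fd R cN a Ψ I r (EuclideanSpace.single i (1:ℝ)))
        = (fun r => (‖r - a‖^2)^cN * ((fderiv ℝ Ψ (I r)) ((R^2 * (‖r - a‖^2)⁻¹) • (EuclideanSpace.single i (1:ℝ)) + (R^2 * (-(((‖r - a‖^2)^2))⁻¹ * (2 * (r i - a i)))) • (r - a))) + Ψ (I r) * ((cN * (‖r - a‖^2)^(cN-1)) * (2 * (r i - a i)))) := by
      funext r
      simp only [KelvinAux.Fd, KelvinAux.Ad, KelvinAux.Sd, ContinuousLinearMap.add_apply,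
        ContinuousLinearMap.coe_comp', Function.comp_apply, ContinuousLinearMap.coe_smul',
        Pi.smul_apply, ContinuousLinearMap.smulRight_apply, ContinuousLinearMap.coe_id',
        id_eq, innerSL_apply_apply, smul_eq_mul, map_add, map_smul]
      rw [EuclideanSpace.inner_single_right]
      simp only [map_sub, RingHom.id_apply, conj_trivial, PiLp.sub_apply]
      rw [div_eq_mul_inv]
      ring_nf
    rw [h2]
    -- build the derivative of the explicit scalar function
    have hq' := KelvinAux.hasFDerivAt_normsq a r₀
    have hco : HasFDerivAt (fun r : EuclideanSpace ℝ (Fin N) => r i - a i)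
        (EuclideanSpace.proj (𝕜 := ℝ) i) r₀ :=
      (EuclideanSpace.proj (𝕜 := ℝ) i).hasFDerivAt.sub_const (a i)
    have h2co := hco.const_mul (2:ℝ)
    have hinv : HasFDerivAt (fun r : EuclideanSpace ℝ (Fin N) => (‖r - a‖^2)⁻¹) _ r₀ :=
      (hasDerivAt_inv hQne).comp_hasFDerivAt r₀ hq'
    have hs2 := hinv.const_mul (R^2)
    have hpow2 : HasFDerivAt (fun r : EuclideanSpace ℝ (Fin N) => (‖r - a‖^2)^2) _ r₀ :=
      (hasDerivAt_pow 2 _).comp_hasFDerivAt r₀ hq'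
    have hinv2 : HasFDerivAt (fun r : EuclideanSpace ℝ (Fin N) => ((‖r - a‖^2)^2)⁻¹) _ r₀ :=
      (hasDerivAt_inv (pow_ne_zero 2 hQne)).comp_hasFDerivAt r₀ hpow2
    have hmsc := (hinv2.fun_neg.fun_mul h2co).const_mul (R^2)
    have hsub : HasFDerivAt (fun r : EuclideanSpace ℝ (Fin N) => r - a)
        (ContinuousLinearMap.id ℝ (EuclideanSpace ℝ (Fin N))) r₀ :=
      (hasFDerivAt_id r₀).sub_const a
    have hvec := (hs2.fun_smul (hasFDerivAt_const (EuclideanSpace.single i (1:ℝ)) r₀)).fun_add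
      (hmsc.fun_smul hsub)
    have hIψ : HasFDerivAt (fun r => Ψ (I r))
        ((fderiv ℝ Ψ (I r₀)).comp (KelvinAux.Ad R a r₀)) r₀ :=
      (hΨd _ hV₀).hasFDerivAt.comp r₀ (KelvinAux.hasFDerivAt_I hI hr₀)
    have hPI : HasFDerivAt (fun r => fderiv ℝ Ψ (I r))
        ((fderiv ℝ (fderiv ℝ Ψ) (I r₀)).comp (KelvinAux.Ad R a r₀)) r₀ :=
      hPd.hasFDerivAt.comp r₀ (KelvinAux.hasFDerivAt_I hI hr₀)
    have hw := hPI.clm_apply hvec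
    have hg : HasFDerivAt (fun r : EuclideanSpace ℝ (Fin N) => (‖r - a‖^2) ^ cN)
        ((cN * (‖r₀ - a‖^2) ^ (cN - 1)) • ((2:ℝ) • innerSL ℝ (r₀ - a))) r₀ :=
      hq'.rpow_const (Or.inl hQne)
    have hgm1 : HasFDerivAt (fun r : EuclideanSpace ℝ (Fin N) => (‖r - a‖^2) ^ (cN - 1))
        (((cN - 1) * (‖r₀ - a‖^2) ^ (cN - 1 - 1)) • ((2:ℝ) • innerSL ℝ (r₀ - a))) r₀ :=
      hq'.rpow_const (Or.inl hQne)
    have hφ := (hg.fun_mul hw).fun_add (hIψ.fun_mul ((hgm1.const_mul cN).fun_mul h2co))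
    rw [hφ.fderiv]
    simp only [KelvinAux.Ad, KelvinAux.Sd, ContinuousLinearMap.add_apply,
      ContinuousLinearMap.coe_comp', Function.comp_apply, ContinuousLinearMap.coe_smul',
      Pi.smul_apply, ContinuousLinearMap.smulRight_apply, ContinuousLinearMap.coe_id',
      id_eq, innerSL_apply_apply, smul_eq_mul, map_add, map_smul,
      ContinuousLinearMap.flip_apply, ContinuousLinearMap.zero_apply, smul_zero, mul_zero,
      zero_add, add_zero, PiLp.proj_apply, EuclideanSpace.inner_single_right,
      map_sub, RingHom.id_apply, conj_trivial, PiLp.sub_apply, mul_one,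
      ContinuousLinearMap.sub_apply, EuclideanSpace.single_apply, eq_self_iff_true, if_true,
      pow_one, Nat.cast_ofNat, ContinuousLinearMap.neg_apply]
    field_simp [norm_ne_zero_iff.mpr (sub_ne_zero.mpr hr₀)]
    ring
  -- assemble the Laplacian
  have hT : laplacian Ψ (I r₀) = ∑ i : Fin N, (fderiv ℝ (fderiv ℝ Ψ) (I r₀)) (EuclideanSpace.single i (1:ℝ)) (EuclideanSpace.single i (1:ℝ)) := by
    unfold laplacian
    refine Finset.sum_congr rfl fun i _ => ?_
    rw [iteratedFDeriv_two_apply]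
    simp only [Matrix.cons_val_zero, Matrix.cons_val_one, Matrix.head_cons]
  have hlap : laplacian (fun r => (‖r - a‖^2) ^ cN * Ψ (I r)) r₀
      = ∑ i : Fin N, fderiv ℝ (KelvinAux.Fd R cN a Ψ I) r₀ (EuclideanSpace.single i (1:ℝ)) (EuclideanSpace.single i (1:ℝ)) := by
    unfold laplacian
    refine Finset.sum_congr rfl fun i _ => ?_
    rw [iteratedFDeriv_two_apply, hsnd]
    simp only [Matrix.cons_val_zero, Matrix.cons_val_one, Matrix.head_cons]
  rw [hlap, Finset.sum_congr rfl (fun i _ => key i), hT]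
  -- split each summand into pieces that can be summed
  have hsplit : ∀ i : Fin N, (‖r₀ - a‖^2)^cN * (2*(-2*R^2*(r₀ i - a i)/(‖r₀ - a‖^2)^2)*((fderiv ℝ Ψ (I r₀)) (EuclideanSpace.single i (1:ℝ))) + (-2*R^2/(‖r₀ - a‖^2)^2 + 8*R^2*(r₀ i - a i)^2/(‖r₀ - a‖^2)^3)*((fderiv ℝ Ψ (I r₀)) (r₀ - a)) + (R^2/(‖r₀ - a‖^2))^2*((fderiv ℝ (fderiv ℝ Ψ) (I r₀)) (EuclideanSpace.single i (1:ℝ)) (EuclideanSpace.single i (1:ℝ))) + (R^2/(‖r₀ - a‖^2))*(-2*R^2*(r₀ i - a i)/(‖r₀ - a‖^2)^2)*((fderiv ℝ (fderiv ℝ Ψ) (I r₀)) (EuclideanSpace.single i (1:ℝ)) (r₀ - a) + (fderiv ℝ (fderiv ℝ Ψ) (I r₀)) (r₀ - a) (EuclideanSpace.single i (1:ℝ))) + (-2*R^2*(r₀ i - a i)/(‖r₀ - a‖^2)^2)^2*((fderiv ℝ (fderiv ℝ Ψ) (I r₀)) (r₀ - a) (r₀ - a))) + 4*cN*(‖r₀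 - a‖^2)^(cN-1)*(r₀ i - a i)*((R^2/(‖r₀ - a‖^2))*((fderiv ℝ Ψ (I r₀)) (EuclideanSpace.single i (1:ℝ))) + (-2*R^2*(r₀ i - a i)/(‖r₀ - a‖^2)^2)*((fderiv ℝ Ψ (I r₀)) (r₀ - a))) + (Ψ (I r₀))*(2*cN*(‖r₀ - a‖^2)^(cN-1) + 4*cN*(cN-1)*(‖r₀ - a‖^2)^(cN-1-1)*(r₀ i - a i)^2)
      = ((‖r₀ - a‖^2)^cN * (-4*R^2/(‖r₀ - a‖^2)^2) + 4*cN*(‖r₀ - a‖^2)^(cN-1)*(R^2/(‖r₀ - a‖^2))) * ((r₀ i - a i) * ((fderiv ℝ Ψ (I r₀)) (EuclideanSpace.single i (1:ℝ))))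
      + ((‖r₀ - a‖^2)^cN * (R^2/(‖r₀ - a‖^2))^2) * ((fderiv ℝ (fderiv ℝ Ψ) (I r₀)) (EuclideanSpace.single i (1:ℝ)) (EuclideanSpace.single i (1:ℝ)))
      + ((‖r₀ - a‖^2)^cN * (R^2/(‖r₀ - a‖^2)) * (-2*R^2/(‖r₀ - a‖^2)^2)) * ((r₀ i - a i) * ((fderiv ℝ (fderiv ℝ Ψ) (I r₀)) (EuclideanSpace.single i (1:ℝ)) (r₀ - a)))
      + ((‖r₀ - a‖^2)^cN * (R^2/(‖r₀ - a‖^2)) * (-2*R^2/(‖r₀ - a‖^2)^2)) * ((r₀ i - a i) * ((fderiv ℝ (fderiv ℝ Ψ) (I r₀)) (r₀ - a) (EuclideanSpace.single i (1:ℝ))))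
      + ((‖r₀ - a‖^2)^cN * ((8*R^2/(‖r₀ - a‖^2)^3) * ((fderiv ℝ Ψ (I r₀)) (r₀ - a)) + (4*R^4/(‖r₀ - a‖^2)^4) * ((fderiv ℝ (fderiv ℝ Ψ) (I r₀)) (r₀ - a) (r₀ - a))) + 4*cN*(‖r₀ - a‖^2)^(cN-1)*(-2*R^2/(‖r₀ - a‖^2)^2)*((fderiv ℝ Ψ (I r₀)) (r₀ - a)) + (Ψ (I r₀))*(4*cN*(cN-1)*(‖r₀ - a‖^2)^(cN-1-1))) * (r₀ i - a i)^2
      + ((‖r₀ - a‖^2)^cN * (-2*R^2/(‖r₀ - a‖^2)^2) * ((fderiv ℝ Ψ (I r₀)) (r₀ - a)) + (Ψ (I r₀))*(2*cN*(‖r₀ - a‖^2)^(cN-1))) := by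
    intro i
    field_simp [norm_ne_zero_iff.mpr (sub_ne_zero.mpr hr₀)]
    ring
  rw [Finset.sum_congr rfl (fun i _ => hsplit i)]
  simp only [Finset.sum_add_distrib, ← Finset.mul_sum, Finset.sum_const, Finset.card_univ,
    Fintype.card_fin, nsmul_eq_mul]
  have hS1 : ∀ (L : EuclideanSpace ℝ (Fin N) →L[ℝ] ℝ),
      ∑ i : Fin N, (r₀ i - a i) * L (EuclideanSpace.single i (1:ℝ)) = L (r₀ - a) := by
    intro L
    have := KelvinAux.clm_sum_eval (r₀ - a) L
    simpa using this
  have hS3 : ∑ i : Fin N, (r₀ i - a i) * (fderiv ℝ (fderiv ℝ Ψ) (I r₀)) (EuclideanSpace.single i (1:ℝ)) (r₀ - a)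
      = (fderiv ℝ (fderiv ℝ Ψ) (I r₀)) (r₀ - a) (r₀ - a) := by
    have := KelvinAux.clm2_sum_eval (r₀ - a) (fderiv ℝ (fderiv ℝ Ψ) (I r₀)) (r₀ - a)
    simpa using this
  have hS5 : ∑ i : Fin N, (r₀ i - a i)^2 = ‖r₀ - a‖^2 := by
    have := KelvinAux.sum_sq_eq (r₀ - a)
    simpa using this
  rw [hS1, hS3, hS1 ((fderiv ℝ (fderiv ℝ Ψ) (I r₀)) (r₀ - a)), hS5]
  -- final algebra
  have hrw1 : ((‖r₀ - a‖^2:ℝ)) ^ (cN - 1) = (‖r₀ - a‖^2:ℝ) ^ cN / (‖r₀ - a‖^2) := by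
    rw [Real.rpow_sub hQpos, Real.rpow_one]
  have hrw2 : ((‖r₀ - a‖^2:ℝ)) ^ (cN - 1 - 1)
      = (‖r₀ - a‖^2:ℝ) ^ cN / (‖r₀ - a‖^2) / (‖r₀ - a‖^2) := by
    rw [Real.rpow_sub hQpos, Real.rpow_sub hQpos, Real.rpow_one]
  have h1 : (‖r₀ - a‖^2:ℝ)^cN / (‖r₀ - a‖^2)^2 = ‖r₀ - a‖ ^ (-((N:ℝ)+2)) := by
    rw [← Real.rpow_natCast ((‖r₀ - a‖^2 : ℝ)) 2, ← Real.rpow_sub hQpos,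
      ← Real.rpow_natCast ‖r₀ - a‖ 2, ← Real.rpow_mul (norm_nonneg _)]
    congr 1
    rw [hcN]
    push_cast
    ring
  have hcoef : R^4 / ‖r₀ - a‖ ^ ((N:ℝ) + 2)
      = (‖r₀ - a‖^2:ℝ)^cN * R^4 / (‖r₀ - a‖^2)^2 := by
    have h2 : ‖r₀ - a‖ ^ (-((N:ℝ)+2)) = (‖r₀ - a‖ ^ ((N:ℝ)+2))⁻¹ :=
      Real.rpow_neg (norm_nonneg _) _
    rw [div_eq_mul_inv, ← h2, ← h1]
    ring
  rw [hrw1, hrw2, hcoef]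
  generalize (‖r₀ - a‖^2:ℝ)^cN = P
  rw [hcN]
  field_simp [norm_ne_zero_iff.mpr (sub_ne_zero.mpr hr₀)]
  ring
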